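/- For any p ≥ 0, the function g(r) defined by g(r) = e^p/p^p for 0 ≤ r ≤ e^p and g(r) = r/(ln r)^p for r ≥ e^p is non-negative, non-decreasing, and subadditive: g(r+s) ≤ g(r) + g(s) for all r, s ≥ 0. -/

import Mathlib

/-- The weight function `g(r) = e^p/p^p` for `0 ≤ r ≤ e^p` and `g(r) = r/(ln r)^p` for
`r ≥ e^p` (real powers). -/
noncomputable def logWeight (p : ℝ) (r : ℝ) : ℝ :=
  if r ≤ Real.exp p then Real.exp p / p ^ p else r / (Real.log r) ^ p

open Real

lemma ppow_pos' {p : ℝ} (hp : 0 ≤ p) : 0 < p ^ p := by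
  rcases hp.eq_or_lt with h | h
  · simp [← h]
  · exact rpow_pos_of_pos h p

/-- `x ↦ e^x / x^p` is monotone on `[p, ∞)`. -/
lemma expdiv_mono {p x y : ℝ} (hp : 0 ≤ p) (hpx : p ≤ x) (hxy : x ≤ y) :
    Real.exp x / x ^ p ≤ Real.exp y / y ^ p := by
  rcases hp.eq_or_lt with h | hp'
  · simp [← h, exp_le_exp, hxy]
  · have hx : 0 < x := lt_of_lt_of_le hp' hpx
    have hy : 0 < y := hx.trans_le hxy
    have h1 : y / x ≤ Real.exp ((y - x) / x) := by
      have h0 := Real.add_one_le_exp ((y - x) / x)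
      calc y / x = (y - x) / x + 1 := by field_simp; ring
        _ ≤ _ := h0
    have h2 : (y / x) ^ p ≤ Real.exp ((y - x) / x) ^ p :=
      rpow_le_rpow (by positivity) h1 hp
    have h3 : Real.exp ((y - x) / x) ^ p = Real.exp ((y - x) / x * p) :=
      (Real.exp_mul _ _).symm
    have h4 : (y - x) / x * p ≤ y - x := by
      have hnn : 0 ≤ (y - x) / x := div_nonneg (by linarith) hx.le
      calc (y - x) / x * p ≤ (y - x) / x * x := by
            exact mul_le_mul_of_nonneg_left hpx hnn
        _ = y - x := by field_simp
    have h5 : (y / x) ^ p ≤ Real.exp (y - x) := by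
      calc (y / x) ^ p ≤ Real.exp ((y - x) / x * p) := h3 ▸ h2
        _ ≤ Real.exp (y - x) := exp_le_exp.mpr h4
    have h6 : y ^ p / x ^ p ≤ Real.exp y / Real.exp x := by
      calc y ^ p / x ^ p = (y / x) ^ p := (Real.div_rpow hy.le hx.le p).symm
        _ ≤ Real.exp (y - x) := h5
        _ = Real.exp y / Real.exp x := Real.exp_sub _ _
    have hxp : (0:ℝ) < x ^ p := rpow_pos_of_pos hx p
    have hyp : (0:ℝ) < y ^ p := rpow_pos_of_pos hy p
    rw [div_le_div_iff₀ hxp hyp]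
    rw [div_le_div_iff₀ hxp (exp_pos x)] at h6
    nlinarith [exp_pos x, exp_pos y]

/-- `u ↦ u / (log u)^p` is monotone on `[e^p, ∞)`. -/
lemma logdiv_mono {p u v : ℝ} (hp : 0 ≤ p) (hu : Real.exp p ≤ u) (huv : u ≤ v) :
    u / (Real.log u) ^ p ≤ v / (Real.log v) ^ p := by
  have hu0 : 0 < u := (exp_pos p).trans_le hu
  have hv0 : 0 < v := hu0.trans_le huv
  have hpu : p ≤ Real.log u := by
    rw [← Real.log_exp p]; exact Real.log_le_log (exp_pos p) hu
  have huv' : Real.log u ≤ Real.log v := Real.log_le_log hu0 huv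
  calc u / (Real.log u) ^ p = Real.exp (Real.log u) / (Real.log u) ^ p := by
        rw [Real.exp_log hu0]
    _ ≤ Real.exp (Real.log v) / (Real.log v) ^ p := expdiv_mono hp hpu huv'
    _ = v / (Real.log v) ^ p := by rw [Real.exp_log hv0]

/-- Key piece for subadditivity. -/
lemma piece {p r t : ℝ} (hp : 0 ≤ p) (hr : 0 ≤ r) (hrt : r ≤ t) (ht : Real.exp p < t) :
    r / (Real.log t) ^ p ≤ logWeight p r := by
  have hlt : p < Real.log t := by
    rw [← Real.log_exp p]; exact Real.log_lt_log (exp_pos p) ht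
  have hlogt : 0 < Real.log t := lt_of_le_of_lt hp hlt
  rw [logWeight]
  split_ifs with h
  · exact div_le_div₀ (exp_pos p).le h (ppow_pos' hp) (rpow_le_rpow hp hlt.le hp)
  · push_neg at h
    have hr0 : 0 < r := (exp_pos p).trans h
    have hlr : p < Real.log r := by
      rw [← Real.log_exp p]; exact Real.log_lt_log (exp_pos p) h
    have hlr0 : 0 < Real.log r := lt_of_le_of_lt hp hlr
    exact div_le_div₀ hr le_rfl (rpow_pos_of_pos hlr0 p)
      (rpow_le_rpow hlr0.le (Real.log_le_log hr0 hrt) hp)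

/-- For any `p ≥ 0`, the function `g = logWeight p` is non-negative,
non-decreasing, and subadditive on `[0,∞)`: `g(r+s) ≤ g(r) + g(s)` for all `r, s ≥ 0`. -/
theorem logWeight_nonneg_monotone_subadditive (p : ℝ) (hp : 0 ≤ p) :
    (∀ r : ℝ, 0 ≤ r → 0 ≤ logWeight p r) ∧
    (∀ r s : ℝ, 0 ≤ r → r ≤ s → logWeight p r ≤ logWeight p s) ∧
    (∀ r s : ℝ, 0 ≤ r → 0 ≤ s → logWeight p (r + s) ≤ logWeight p r + logWeight p s) := by
  have nonneg : ∀ r : ℝ, 0 ≤ logWeight p r := by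
    intro r
    rw [logWeight]
    split_ifs with h
    · have := ppow_pos' hp
      positivity
    · push_neg at h
      have hr1 : (1:ℝ) ≤ r := le_of_lt (lt_of_le_of_lt (Real.one_le_exp hp) h)
      exact div_nonneg (by linarith) (rpow_nonneg (Real.log_nonneg hr1) p)
  refine ⟨fun r _ => nonneg r, ?_, ?_⟩
  · intro r s hr hrs
    rw [logWeight, logWeight]
    split_ifs with h1 h2 h2
    · exact le_refl _
    · push_neg at h2
      have := logdiv_mono hp (le_refl (Real.exp p)) h2.le
      simpa [Real.log_exp] using this
    · exact absurd (hrs.trans h2) h1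
    · push_neg at h1
      exact logdiv_mono hp h1.le hrs
  · intro r s hr hs
    by_cases h : r + s ≤ Real.exp p
    · have hrp : r ≤ Real.exp p := le_trans (by linarith) h
      have hsp : s ≤ Real.exp p := le_trans (by linarith) h
      have hsn := nonneg s
      rw [logWeight, if_pos h, logWeight, if_pos hrp]
      rw [logWeight, if_pos hsp] at hsn ⊢
      linarith
    · push_neg at h
      have h1 : logWeight p (r + s) = r / (Real.log (r+s)) ^ p + s / (Real.log (r+s)) ^ p := by
        rw [logWeight, if_neg (not_le.mpr h), add_div]
      rw [h1]
      exact add_le_add (piece hp hr (by linarith) h) (piece hp hs (by linarith) h)
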